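/- (Asymptotic convergence of 1-RCD) Under the block Lipschitz and convex-separable assumptions with uniform block selection, the sequence generated by the 1-random coordinate descent method satisfies: the random variables M_1(x^k, L) converge to 0 almost surely, F(x^k) converges almost surely to some random variable F̄, and every accumulation point of (x^k) is a stationary point of min_x f(x) + h(x). -/

import Mathlib

open scoped BigOperators RealInnerProductSpace
open Finset Filter

noncomputable section

/-- The ambient space `ℝ^n` with the Euclidean norm. -/
abbrev En (n : ℕ) := EuclideanSpace ℝ (Fin n)

/-- Projection onto block `i` of the block decomposition of `ℝ^n` given by the
block-index map `blk : Fin n → Fin N`; it realizes `U_i U_iᵀ y`. -/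
def blockProj {n N : ℕ} (blk : Fin n → Fin N) (i : Fin N) (y : En n) : En n :=
  WithLp.toLp 2 (fun j => if blk j = i then y j else 0)

lemma blockProj_apply {n N : ℕ} (blk : Fin n → Fin N) (i : Fin N) (y : En n) (j : Fin n) :
    blockProj blk i y j = if blk j = i then y j else 0 := rfl

/-- The squared block norm `‖x‖_L² = ∑ i, L i ‖x_i‖²`. -/
def blockNormSq {n N : ℕ} (blk : Fin n → Fin N) (L : Fin N → ℝ) (x : En n) : ℝ :=
  ∑ i, L i * ‖blockProj blk i x‖ ^ 2

/-- `gh` is a subgradient of the convex function `h` at `x`. -/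
def IsSubgradientAt {n : ℕ} (h : En n → ℝ) (gh x : En n) : Prop :=
  ∀ y, h x + ⟪gh, y - x⟫ ≤ h y

open MeasureTheory ProbabilityTheory

section aux
variable {n N : ℕ} (blk : Fin n → Fin N)

lemma bp_add (i : Fin N) (x y : En n) :
    blockProj blk i (x + y) = blockProj blk i x + blockProj blk i y := by
  ext j; show _ = blockProj blk i x j + blockProj blk i y j
  simp only [blockProj_apply]; split <;> simp

lemma bp_smul (i : Fin N) (c : ℝ) (x : En n) :
    blockProj blk i (c • x) = c • blockProj blk i x := by
  ext j; show _ = c • blockProj blk i x j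
  simp only [blockProj_apply]; split <;> simp

lemma bp_supported {i : Fin N} {s : En n} (hs : ∀ j, blk j ≠ i → s j = 0) :
    blockProj blk i s = s := by
  ext j; simp only [blockProj_apply]; split
  · rfl
  · exact (hs j (by assumption)).symm

lemma bp_supp (i : Fin N) (x : En n) : ∀ j, blk j ≠ i → blockProj blk i x j = 0 := by
  intro j hj; simp [blockProj_apply, hj]

lemma bp_ne {i k : Fin N} (hki : k ≠ i) {s : En n} (hs : ∀ j, blk j ≠ i → s j = 0) :
    blockProj blk k s = 0 := by
  ext j; show _ = (0:ℝ)
  simp only [blockProj_apply]; split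
  · rename_i hj; exact hs j (fun h => hki (hj ▸ h))
  · rfl

lemma sum_apply' {ι : Type*} (s : Finset ι) (f : ι → En n) (j : Fin n) :
    (∑ i ∈ s, f i) j = ∑ i ∈ s, f i j := by
  induction s using Finset.cons_induction with
  | empty => rfl
  | cons a s ha ih =>
      rw [Finset.sum_cons, Finset.sum_cons, ← ih]; rfl

lemma sum_bp (x : En n) : ∑ i, blockProj blk i x = x := by
  ext j
  rw [sum_apply']
  rw [Finset.sum_eq_single (blk j)]
  · simp [blockProj_apply]
  · intro b _ hb; simp only [blockProj_apply]; rw [if_neg (fun h => hb h.symm)]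
  · simp

lemma inner_eq (x y : En n) : ⟪x, y⟫ = ∑ j, x j * y j := by
  simp [PiLp.inner_apply, RCLike.inner_apply, conj_trivial, mul_comm]

lemma inner_bp_of_supported {i : Fin N} (a : En n) {s : En n}
    (hs : ∀ j, blk j ≠ i → s j = 0) : ⟪a, s⟫ = ⟪blockProj blk i a, s⟫ := by
  rw [inner_eq, inner_eq]
  apply Finset.sum_congr rfl
  intro j _
  by_cases hj : blk j = i
  · simp [blockProj_apply, hj]
  · simp [hs j hj]

/-- `h` decomposes as a sum over blocks. -/
lemma h_sep_add {h : En n → ℝ} {H : Fin N → En n → ℝ}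
    (hsep : ∀ x, h x = ∑ k, H k (blockProj blk k x)) (x s : En n) :
    h (x + s) = ∑ k, H k (blockProj blk k x + blockProj blk k s) := by
  rw [hsep]; apply Finset.sum_congr rfl; intro k _; rw [bp_add]

/-- effect of a block-supported perturbation on h -/
lemma h_add_supported {h : En n → ℝ} {H : Fin N → En n → ℝ}
    (hsep : ∀ x, h x = ∑ k, H k (blockProj blk k x)) (x : En n) {i : Fin N} {s : En n}
    (hs : ∀ j, blk j ≠ i → s j = 0) :
    h (x + s) = h x + H i (blockProj blk i x + s) - H i (blockProj blk i x) := by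
  rw [h_sep_add blk hsep, hsep]
  have : ∑ k, H k (blockProj blk k x + blockProj blk k s)
      - ∑ k, H k (blockProj blk k x)
      = H i (blockProj blk i x + s) - H i (blockProj blk i x) := by
    rw [← Finset.sum_sub_distrib]
    rw [Finset.sum_eq_single i]
    · rw [bp_supported blk hs]
    · intro b _ hb
      rw [bp_ne blk hb hs, add_zero, sub_self]
    · simp
  linarith

lemma h_sum_blocks {h : En n → ℝ} {H : Fin N → En n → ℝ}
    (hsep : ∀ x, h x = ∑ k, H k (blockProj blk k x)) (x s : En n) :
    ∑ i, (h (x + blockProj blk i s) - h x) = h (x + s) - h x := by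
  have e1 : ∀ i : Fin N, h (x + blockProj blk i s) - h x
      = H i (blockProj blk i x + blockProj blk i s) - H i (blockProj blk i x) := by
    intro i
    rw [h_add_supported blk hsep x (bp_supp blk i s)]
    ring
  rw [Finset.sum_congr rfl (fun i _ => e1 i)]
  rw [h_sep_add blk hsep, hsep x, ← Finset.sum_sub_distrib]

lemma h_convex {h : En n → ℝ} {H : Fin N → En n → ℝ}
    (hHconv : ∀ k, ConvexOn ℝ Set.univ (H k))
    (hsep : ∀ x, h x = ∑ k, H k (blockProj blk k x)) :
    ConvexOn ℝ Set.univ h := by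
  refine ⟨convex_univ, fun x _ y _ a b ha hb hab => ?_⟩
  rw [hsep, hsep, hsep]
  rw [Finset.smul_sum, Finset.smul_sum, ← Finset.sum_add_distrib]
  apply Finset.sum_le_sum
  intro k _
  have : blockProj blk k (a • x + b • y) = a • blockProj blk k x + b • blockProj blk k y := by
    rw [bp_add, bp_smul, bp_smul]
  rw [this]
  exact (hHconv k).2 (Set.mem_univ _) (Set.mem_univ _) ha hb hab

lemma bp_sub (i : Fin N) (x y : En n) :
    blockProj blk i (x - y) = blockProj blk i x - blockProj blk i y := by
  ext j; show _ = blockProj blk i x j - blockProj blk i y j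
  simp only [blockProj_apply]; split <;> simp

lemma line_deriv {f : En n → ℝ} {g : En n → En n} (hg : ∀ x, HasGradientAt f (g x) x)
    (x s : En n) (t : ℝ) :
    HasDerivAt (fun t : ℝ => f (x + t • s)) ⟪g (x + t • s), s⟫ t := by
  have h1 : HasDerivAt (fun t : ℝ => x + t • s) s t := by
    simpa using ((hasDerivAt_id t).smul_const s).const_add x
  have h2 := (hg (x + t • s)).hasFDerivAt.comp_hasDerivAt t h1
  simp [InnerProductSpace.toDual_apply_apply] at h2
  exact h2

lemma descent_abs {f : En n → ℝ} {g : En n → En n} (hg : ∀ x, HasGradientAt f (g x) x)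
    (L : Fin N → ℝ)
    (hlip : ∀ (i : Fin N) (x s : En n), (∀ j, blk j ≠ i → s j = 0) →
      ‖blockProj blk i (g (x + s)) - blockProj blk i (g x)‖ ≤ L i * ‖s‖)
    {i : Fin N} (x : En n) {s : En n} (hs : ∀ j, blk j ≠ i → s j = 0) :
    |f (x + s) - f x - ⟪g x, s⟫| ≤ L i / 2 * ‖s‖ ^ 2 := by
  -- derivative bound
  have dbound : ∀ t : ℝ, 0 ≤ t →
      |⟪g (x + t • s), s⟫ - ⟪g x, s⟫| ≤ L i * t * ‖s‖ ^ 2 := by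
    intro t ht
    have hsup : ∀ j, blk j ≠ i → (t • s) j = 0 := by
      intro j hj
      show t • s j = 0
      rw [hs j hj, smul_zero]
    have e1 : ⟪g (x + t • s), s⟫ - ⟪g x, s⟫ = ⟪g (x + t • s) - g x, s⟫ := by
      rw [inner_sub_left]
    rw [e1, inner_bp_of_supported blk _ hs, bp_sub]
    calc |⟪blockProj blk i (g (x + t • s)) - blockProj blk i (g x), s⟫|
        ≤ ‖blockProj blk i (g (x + t • s)) - blockProj blk i (g x)‖ * ‖s‖ :=
          abs_real_inner_le_norm _ _
      _ ≤ (L i * ‖t • s‖) * ‖s‖ := by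
          apply mul_le_mul_of_nonneg_right (hlip i x (t • s) hsup) (norm_nonneg _)
      _ = L i * t * ‖s‖ ^ 2 := by
          rw [norm_smul, Real.norm_eq_abs, abs_of_nonneg ht]; ring
  have hdiff : ∀ t : ℝ, HasDerivAt (fun t : ℝ => f (x + t • s))
      ⟪g (x + t • s), s⟫ t := line_deriv hg x s
  -- upper bound
  have upper : f (x + s) - f x - ⟪g x, s⟫ ≤ L i / 2 * ‖s‖ ^ 2 := by
    set w : ℝ → ℝ := fun t => f (x + t • s) - t * ⟪g x, s⟫ - L i / 2 * t ^ 2 * ‖s‖ ^ 2 with hw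
    have hwd : ∀ t : ℝ, HasDerivAt w
        (⟪g (x + t • s), s⟫ - ⟪g x, s⟫ - L i * t * ‖s‖ ^ 2) t := by
      intro t
      have h1 : HasDerivAt (fun t : ℝ => t * ⟪g x, s⟫) ⟪g x, s⟫ t := by
        simpa using (hasDerivAt_id t).mul_const ⟪g x, s⟫
      have h2 : HasDerivAt (fun t : ℝ => L i / 2 * t ^ 2 * ‖s‖ ^ 2)
          (L i * t * ‖s‖ ^ 2) t := by
        have := ((hasDerivAt_pow 2 t).const_mul (L i / 2)).mul_const (‖s‖ ^ 2)
        exact this.congr_deriv (by ring)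
      exact ((hdiff t).sub h1).sub h2
    have hmono : AntitoneOn w (Set.Icc 0 1) := by
      apply antitoneOn_of_deriv_nonpos (convex_Icc 0 1)
      · exact Continuous.continuousOn (by
          have : Differentiable ℝ w := fun t => (hwd t).differentiableAt
          exact this.continuous)
      · intro t ht
        exact ((hwd t).differentiableAt).differentiableWithinAt
      · intro t ht
        rw [(hwd t).deriv]
        rw [interior_Icc] at ht
        have := (abs_le.mp (dbound t (le_of_lt ht.1))).2
        linarith
    have h01 := hmono (Set.mem_Icc.mpr ⟨le_refl 0, zero_le_one⟩)
      (Set.mem_Icc.mpr ⟨zero_le_one, le_refl 1⟩) zero_le_one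
    simp only [hw, one_smul, zero_smul, add_zero, one_mul, one_pow, zero_mul, zero_pow,
      mul_zero, sub_zero] at h01
    linarith
  -- lower bound
  have lower : -(L i / 2 * ‖s‖ ^ 2) ≤ f (x + s) - f x - ⟪g x, s⟫ := by
    set w : ℝ → ℝ := fun t => f (x + t • s) - t * ⟪g x, s⟫ + L i / 2 * t ^ 2 * ‖s‖ ^ 2 with hw
    have hwd : ∀ t : ℝ, HasDerivAt w
        (⟪g (x + t • s), s⟫ - ⟪g x, s⟫ + L i * t * ‖s‖ ^ 2) t := by
      intro t
      have h1 : HasDerivAt (fun t : ℝ => t * ⟪g x, s⟫) ⟪g x, s⟫ t := by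
        simpa using (hasDerivAt_id t).mul_const ⟪g x, s⟫
      have h2 : HasDerivAt (fun t : ℝ => L i / 2 * t ^ 2 * ‖s‖ ^ 2)
          (L i * t * ‖s‖ ^ 2) t := by
        have := ((hasDerivAt_pow 2 t).const_mul (L i / 2)).mul_const (‖s‖ ^ 2)
        exact this.congr_deriv (by ring)
      exact ((hdiff t).sub h1).add h2
    have hmono : MonotoneOn w (Set.Icc 0 1) := by
      apply monotoneOn_of_deriv_nonneg (convex_Icc 0 1)
      · exact Continuous.continuousOn (by
          have : Differentiable ℝ w := fun t => (hwd t).differentiableAt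
          exact this.continuous)
      · intro t ht
        exact ((hwd t).differentiableAt).differentiableWithinAt
      · intro t ht
        rw [(hwd t).deriv]
        rw [interior_Icc] at ht
        have := (abs_le.mp (dbound t (le_of_lt ht.1))).1
        linarith
    have h01 := hmono (Set.mem_Icc.mpr ⟨le_refl 0, zero_le_one⟩)
      (Set.mem_Icc.mpr ⟨zero_le_one, le_refl 1⟩) zero_le_one
    simp only [hw, one_smul, zero_smul, add_zero, one_mul, one_pow, zero_mul, zero_pow,
      mul_zero, sub_zero] at h01
    linarith
  rw [abs_le]; exact ⟨lower, upper⟩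

variable (L : Fin N → ℝ)

lemma bnsq_nonneg (hL : ∀ i, 0 < L i) (x : En n) : 0 ≤ blockNormSq blk L x :=
  Finset.sum_nonneg fun i _ => mul_nonneg (hL i).le (sq_nonneg _)

lemma bnsq_smul (c : ℝ) (x : En n) :
    blockNormSq blk L (c • x) = c ^ 2 * blockNormSq blk L x := by
  unfold blockNormSq
  rw [Finset.mul_sum]
  apply Finset.sum_congr rfl
  intro i _
  rw [bp_smul, norm_smul, Real.norm_eq_abs, mul_pow, sq_abs]
  ring

lemma bnsq_block_le (hL : ∀ i, 0 < L i) (i : Fin N) (x : En n) :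
    L i * ‖blockProj blk i x‖ ^ 2 ≤ blockNormSq blk L x := by
  apply Finset.single_le_sum (f := fun k => L k * ‖blockProj blk k x‖ ^ 2)
    (fun k _ => mul_nonneg (hL k).le (sq_nonneg _)) (Finset.mem_univ i)

/-- `blockNormSq` of a vector equals the sum over blocks; block swap identity. -/
lemma bnsq_swap (hL : ∀ i, 0 < L i) (i : Fin N) (v : En n) {s : En n}
    (hs : ∀ j, blk j ≠ i → s j = 0) :
    blockNormSq blk L (v - blockProj blk i v + s)
      = blockNormSq blk L v - L i * ‖blockProj blk i v‖ ^ 2 + L i * ‖s‖ ^ 2 := by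
  unfold blockNormSq
  have key : ∀ k : Fin N, blockProj blk k (v - blockProj blk i v + s)
      = if k = i then s else blockProj blk k v := by
    intro k
    rw [bp_add, bp_sub]
    by_cases hk : k = i
    · subst hk
      rw [bp_supported blk (bp_supp blk k v), bp_supported blk hs]
      simp
    · rw [bp_ne blk hk hs, bp_ne blk hk (bp_supp blk i v)]
      simp [hk]
  rw [Finset.sum_congr rfl (fun k _ => by rw [key k])]
  have : ∑ k, L k * ‖if k = i then s else blockProj blk k v‖ ^ 2
      - ∑ k, L k * ‖blockProj blk k v‖ ^ 2 = L i * ‖s‖ ^ 2 - L i * ‖blockProj blk i v‖ ^ 2 := by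
    rw [← Finset.sum_sub_distrib]
    rw [Finset.sum_eq_single i]
    · simp
    · intro b _ hb; simp [hb]
    · simp
  linarith

variable {h : En n → ℝ} {H : Fin N → En n → ℝ} {f : En n → ℝ} {g : En n → En n}
  {dL : En n → En n}

/-- The block component of `dL x` minimizes the block subproblem. -/
lemma block_swap (hL : ∀ i, 0 < L i)
    (hsep : ∀ x, h x = ∑ k, H k (blockProj blk k x))
    (hdL : ∀ x s : En n,
      f x + ⟪g x, dL x⟫ + (1 / 2) * blockNormSq blk L (dL x) + h (x + dL x) ≤
      f x + ⟪g x, s⟫ + (1 / 2) * blockNormSq blk L s + h (x + s))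
    (x : En n) (i : Fin N) {s : En n} (hs : ∀ j, blk j ≠ i → s j = 0) :
    ⟪g x, blockProj blk i (dL x)⟫ + L i / 2 * ‖blockProj blk i (dL x)‖ ^ 2
        + h (x + blockProj blk i (dL x))
      ≤ ⟪g x, s⟫ + L i / 2 * ‖s‖ ^ 2 + h (x + s) := by
  set v := dL x with hv
  set u := blockProj blk i v with hu
  have husupp : ∀ j, blk j ≠ i → u j = 0 := bp_supp blk i v
  have hsu : ∀ j, blk j ≠ i → (s - u) j = 0 := by
    intro j hj
    show s j - u j = 0
    rw [hs j hj, husupp j hj, sub_zero]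
  have key := hdL x (v - u + s)
  -- inner product
  have e1 : ⟪g x, v - u + s⟫ = ⟪g x, v⟫ - ⟪g x, u⟫ + ⟪g x, s⟫ := by
    rw [inner_add_right, inner_sub_right]
  -- block norm
  have e2 : blockNormSq blk L (v - u + s)
      = blockNormSq blk L v - L i * ‖u‖ ^ 2 + L i * ‖s‖ ^ 2 := bnsq_swap blk L hL i v hs
  -- h value
  have e3 : h (x + (v - u + s)) = h (x + v) + h (x + s) - h (x + u) := by
    have hxs' : x + (v - u + s) = (x + v) + (s - u) := by abel
    rw [hxs', h_add_supported blk hsep (x + v) hsu]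
    have e4 : blockProj blk i (x + v) = blockProj blk i x + u := by rw [bp_add]
    rw [e4]
    have e5 : blockProj blk i x + u + (s - u) = blockProj blk i x + s := by abel
    rw [e5]
    rw [h_add_supported blk hsep x hs, h_add_supported blk hsep x husupp]
    ring
  rw [e1, e2, e3] at key
  linarith

/-- strong-convexity gap for the full proximal subproblem at its minimizer -/
lemma psi_gap (hL : ∀ i, 0 < L i)
    (hHconv : ∀ k, ConvexOn ℝ Set.univ (H k))
    (hsep : ∀ x, h x = ∑ k, H k (blockProj blk k x))
    (hdL : ∀ x s : En n,
      f x + ⟪g x, dL x⟫ + (1 / 2) * blockNormSq blk L (dL x) + h (x + dL x) ≤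
      f x + ⟪g x, s⟫ + (1 / 2) * blockNormSq blk L s + h (x + s))
    (x : En n) :
    f x + ⟪g x, dL x⟫ + (1 / 2) * blockNormSq blk L (dL x) + h (x + dL x)
      ≤ f x + h x - (1 / 2) * blockNormSq blk L (dL x) := by
  have hconv := h_convex blk hHconv hsep
  set v := dL x with hv
  set b := blockNormSq blk L v with hb
  have hbnn : 0 ≤ b := bnsq_nonneg blk L hL v
  set P := ⟪g x, v⟫ + (1 / 2) * b + h (x + v) with hP
  -- for each t ∈ (0,1): P ≤ h x - (1-t)/2 * b
  have step : ∀ t : ℝ, 0 < t → t < 1 → P ≤ h x - (1 - t) / 2 * b := by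
    intro t ht ht1
    have key := hdL x ((1 - t) • v)
    have e1 : ⟪g x, (1 - t) • v⟫ = (1 - t) * ⟪g x, v⟫ := real_inner_smul_right _ _ _
    have e2 : blockNormSq blk L ((1 - t) • v) = (1 - t) ^ 2 * b := bnsq_smul blk L _ v
    have e3 : h (x + (1 - t) • v) ≤ (1 - t) * h (x + v) + t * h x := by
      have hxe : x + (1 - t) • v = (1 - t) • (x + v) + t • x := by
        rw [smul_add]
        rw [sub_smul, one_smul, sub_smul, one_smul]
        abel
      rw [hxe]
      exact hconv.2 (Set.mem_univ _) (Set.mem_univ _) (by linarith) (le_of_lt ht)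
        (by ring)
    have key2 : t * P ≤ t * h x - t * (1 - t) / 2 * b := by
      rw [e1, e2] at key
      have : (1 - t) ^ 2 = (1 - t) - t * (1 - t) := by ring
      nlinarith [key, e3]
    have := mul_le_mul_of_nonneg_left (le_of_lt ht) (le_of_lt ht)  -- dummy
    nlinarith [key2, ht]
  -- take t → 0
  have lim : Tendsto (fun m : ℕ => h x - (1 - 1 / (m + 2 : ℝ)) / 2 * b) atTop
      (nhds (h x - (1 - 0) / 2 * b)) := by
    apply Tendsto.const_sub
    apply Tendsto.mul_const
    apply Tendsto.div_const
    apply Tendsto.const_sub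
    have h1 : Tendsto (fun m : ℕ => ((m : ℝ) + 2)) atTop atTop := by
      apply tendsto_atTop_add_const_right
      exact tendsto_natCast_atTop_atTop
    exact h1.inv_tendsto_atTop.congr (fun m => by simp [Pi.inv_apply, one_div])
  have hle : P ≤ h x - (1 - 0) / 2 * b := by
    apply ge_of_tendsto' lim
    intro m
    apply step
    · positivity
    · rw [div_lt_one (by positivity)]
      have : (0:ℝ) ≤ (m:ℝ) := Nat.cast_nonneg m
      linarith
  simp only [sub_zero] at hle
  have : P ≤ h x - 1 / 2 * b := by linarith
  linarith [this]

variable {F : En n → ℝ} {d : En n → Fin N → En n}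

/-- single-step decrease: `F (x + d x i) ≤ F x`. -/
lemma F_decrease (hg : ∀ x, HasGradientAt f (g x) x)
    (hlip : ∀ (i : Fin N) (x s : En n), (∀ j, blk j ≠ i → s j = 0) →
      ‖blockProj blk i (g (x + s)) - blockProj blk i (g x)‖ ≤ L i * ‖s‖)
    (hF : ∀ x, F x = f x + h x)
    (hdsupp : ∀ x i j, blk j ≠ i → d x i j = 0)
    (hdmin : ∀ (x : En n) (i : Fin N) (s : En n), (∀ j, blk j ≠ i → s j = 0) →
      f x + ⟪g x, d x i⟫ + L i / 2 * ‖d x i‖ ^ 2 + h (x + d x i) ≤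
      f x + ⟪g x, s⟫ + L i / 2 * ‖s‖ ^ 2 + h (x + s))
    (x : En n) (i : Fin N) : F (x + d x i) ≤ F x := by
  have h1 := (abs_le.mp (descent_abs blk hg L hlip x (hdsupp x i))).2
  have h2 := hdmin x i 0 (fun j _ => rfl)
  simp only [inner_zero_right, norm_zero, add_zero] at h2
  rw [hF, hF]
  have : (0:ℝ)^2 = 0 := by norm_num
  rw [this, mul_zero] at h2
  simp only [add_zero] at h2
  linarith

/-- key expected-decrease inequality (summed over blocks). -/
lemma key_sum (hL : ∀ i, 0 < L i) (hg : ∀ x, HasGradientAt f (g x) x)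
    (hlip : ∀ (i : Fin N) (x s : En n), (∀ j, blk j ≠ i → s j = 0) →
      ‖blockProj blk i (g (x + s)) - blockProj blk i (g x)‖ ≤ L i * ‖s‖)
    (hHconv : ∀ k, ConvexOn ℝ Set.univ (H k))
    (hsep : ∀ x, h x = ∑ k, H k (blockProj blk k x))
    (hF : ∀ x, F x = f x + h x)
    (hdsupp : ∀ x i j, blk j ≠ i → d x i j = 0)
    (hdmin : ∀ (x : En n) (i : Fin N) (s : En n), (∀ j, blk j ≠ i → s j = 0) →
      f x + ⟪g x, d x i⟫ + L i / 2 * ‖d x i‖ ^ 2 + h (x + d x i) ≤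
      f x + ⟪g x, s⟫ + L i / 2 * ‖s‖ ^ 2 + h (x + s))
    (hdL : ∀ x s : En n,
      f x + ⟪g x, dL x⟫ + (1 / 2) * blockNormSq blk L (dL x) + h (x + dL x) ≤
      f x + ⟪g x, s⟫ + (1 / 2) * blockNormSq blk L s + h (x + s))
    (x : En n) :
    ∑ i, F (x + d x i) ≤ N * F x - (1 / 2) * blockNormSq blk L (dL x) := by
  have per : ∀ i : Fin N, F (x + d x i)
      ≤ f x + ⟪g x, blockProj blk i (dL x)⟫ + L i / 2 * ‖blockProj blk i (dL x)‖ ^ 2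
        + h (x + blockProj blk i (dL x)) := by
    intro i
    have h1 := (abs_le.mp (descent_abs blk hg L hlip x (hdsupp x i))).2
    have h2 := hdmin x i (blockProj blk i (dL x)) (bp_supp blk i (dL x))
    rw [hF]
    linarith
  have hsum : ∑ i, F (x + d x i) ≤ ∑ i, (f x + ⟪g x, blockProj blk i (dL x)⟫
        + L i / 2 * ‖blockProj blk i (dL x)‖ ^ 2 + h (x + blockProj blk i (dL x))) :=
    Finset.sum_le_sum (fun i _ => per i)
  -- compute the RHS sum
  have e1 : ∑ i, (f x + ⟪g x, blockProj blk i (dL x)⟫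
        + L i / 2 * ‖blockProj blk i (dL x)‖ ^ 2 + h (x + blockProj blk i (dL x)))
      = N * f x + ⟪g x, dL x⟫ + (1 / 2) * blockNormSq blk L (dL x)
        + (N * h x + (h (x + dL x) - h x)) := by
    rw [Finset.sum_add_distrib, Finset.sum_add_distrib, Finset.sum_add_distrib]
    congr 1
    · congr 1
      · congr 1
        · rw [Finset.sum_const, Finset.card_univ, Fintype.card_fin, nsmul_eq_mul]
        · rw [← inner_sum]  -- ∑ ⟪g x, pᵢ⟫ = ⟪g x, ∑ pᵢ⟫
          rw [sum_bp]
      · unfold blockNormSq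
        rw [Finset.mul_sum]
        apply Finset.sum_congr rfl
        intro i _
        ring
    · have hb := h_sum_blocks blk hsep x (dL x)
      have : ∑ i : Fin N, h (x + blockProj blk i (dL x))
          = ∑ i : Fin N, ((h (x + blockProj blk i (dL x)) - h x) + h x) := by
        apply Finset.sum_congr rfl; intro i _; ring
      rw [this, Finset.sum_add_distrib, hb, Finset.sum_const, Finset.card_univ,
        Fintype.card_fin, nsmul_eq_mul]
      ring
  have gap := psi_gap blk L hL hHconv hsep hdL x
  rw [e1] at hsum
  rw [hF]
  have hFsum : ∑ i : Fin N, F (x + d x i) ≤ N * f x + N * h x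
      - (1/2) * blockNormSq blk L (dL x) + (h (x + dL x) - h (x + dL x)) := by
    nlinarith [hsum, gap]
  have hN1 : (0:ℝ) ≤ N := Nat.cast_nonneg N
  nlinarith [hFsum]

/-- deterministic iterate map -/
def iter (d : En n → Fin N → En n) (x0 : En n) : ∀ k : ℕ, (Fin k → Fin N) → En n
  | 0, _ => x0
  | (k+1), t =>
      iter d x0 k (fun j => t j.castSucc)
        + d (iter d x0 k (fun j => t j.castSucc)) (t (Fin.last k))

variable {Ω : Type*} [MeasurableSpace Ω] (μ : MeasureTheory.Measure Ω)
  [MeasureTheory.IsProbabilityMeasure μ]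

open MeasureTheory ProbabilityTheory

lemma X_eq_iter {I : ℕ → Ω → Fin N} {X : ℕ → Ω → En n} {x0 : En n}
    (hX0 : ∀ ω, X 0 ω = x0)
    (hXs : ∀ k ω, X (k + 1) ω = X k ω + d (X k ω) (I k ω)) (k : ℕ) (ω : Ω) :
    X k ω = iter d x0 k (fun j : Fin k => I (j : ℕ) ω) := by
  induction k with
  | zero => exact hX0 ω
  | succ k ih =>
      rw [hXs k ω, ih]
      show _ = iter d x0 (k+1) _
      rw [iter]
      have e : (fun j : Fin k => I ((Fin.castSucc j : Fin (k+1)) : ℕ) ω)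
          = fun j : Fin k => I (j : ℕ) ω := by
        funext j; rw [Fin.coe_castSucc]
      rw [e, Fin.val_last]

lemma tuple_measure {I : ℕ → Ω → Fin N}
    (hIindep : iIndepFun I μ)
    (hIunif : ∀ k i, μ (I k ⁻¹' {i}) = (N : ENNReal)⁻¹)
    (k : ℕ) (t : Fin k → Fin N) :
    μ ((fun ω => (fun j : Fin k => I (j : ℕ) ω)) ⁻¹' {t}) = (N : ENNReal)⁻¹ ^ k := by
  classical
  set sets : ℕ → Set (Fin N) := fun j => if hj : j < k then {t ⟨j, hj⟩} else Set.univ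
    with hsets
  have hset : ((fun ω => (fun j : Fin k => I (j : ℕ) ω)) ⁻¹' {t})
      = ⋂ j ∈ Finset.range k, I j ⁻¹' sets j := by
    ext ω
    simp only [Set.mem_preimage, Set.mem_singleton_iff, Set.mem_iInter, funext_iff,
      Finset.mem_range]
    constructor
    · intro hw j hj
      simp only [hsets, dif_pos hj, Set.mem_preimage, Set.mem_singleton_iff]
      exact hw ⟨j, hj⟩
    · intro hw j
      have := hw (j : ℕ) j.isLt
      simpa only [hsets, dif_pos j.isLt, Set.mem_preimage, Set.mem_singleton_iff] using this
  rw [hset]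
  rw [hIindep.measure_inter_preimage_eq_mul (Finset.range k)
    (fun i _ => (by exact trivial : MeasurableSet (sets i)))]
  have : ∀ j ∈ Finset.range k, μ (I j ⁻¹' sets j) = (N : ENNReal)⁻¹ := by
    intro j hj
    rw [Finset.mem_range] at hj
    simp only [hsets, dif_pos hj]
    exact hIunif j _
  rw [Finset.prod_congr rfl this, Finset.prod_const, Finset.card_range]

lemma tuple_lintegral {I : ℕ → Ω → Fin N} (hImeas : ∀ k, Measurable (I k))
    (hIindep : iIndepFun I μ)
    (hIunif : ∀ k i, μ (I k ⁻¹' {i}) = (N : ENNReal)⁻¹)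
    (k : ℕ) (G : (Fin k → Fin N) → ENNReal) :
    ∫⁻ ω, G (fun j : Fin k => I (j : ℕ) ω) ∂μ
      = ∑ t : Fin k → Fin N, G t * (N : ENNReal)⁻¹ ^ k := by
  have hT : Measurable (fun ω => (fun j : Fin k => I (j : ℕ) ω)) :=
    measurable_pi_lambda _ fun j => hImeas j
  rw [← lintegral_map (measurable_of_countable G) hT]
  rw [lintegral_fintype]
  apply Finset.sum_congr rfl
  intro t _
  rw [Measure.map_apply hT (measurableSet_singleton t), tuple_measure μ hIindep hIunif]


lemma cluster_stationary (hL : ∀ i, 0 < L i)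
    (hg : ∀ x, HasGradientAt f (g x) x)
    (hlip : ∀ (i : Fin N) (x s : En n), (∀ j, blk j ≠ i → s j = 0) →
      ‖blockProj blk i (g (x + s)) - blockProj blk i (g x)‖ ≤ L i * ‖s‖)
    (hHconv : ∀ k, ConvexOn ℝ Set.univ (H k))
    (hsep : ∀ x, h x = ∑ k, H k (blockProj blk k x)) (hcont : Continuous h)
    (hdL : ∀ x s : En n,
      f x + ⟪g x, dL x⟫ + (1 / 2) * blockNormSq blk L (dL x) + h (x + dL x) ≤
      f x + ⟪g x, s⟫ + (1 / 2) * blockNormSq blk L s + h (x + s))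
    (y : ℕ → En n)
    (hv : Tendsto (fun k => blockNormSq blk L (dL (y k))) atTop (nhds 0))
    (xbar : En n) (hcl : MapClusterPt xbar atTop y) :
    ∃ gh : En n, IsSubgradientAt h gh xbar ∧ g xbar + gh = 0 := by
  have hconv := h_convex blk hHconv hsep
  have hfcont : Continuous f := by
    rw [continuous_iff_continuousAt]
    intro x
    exact ((hg x).hasFDerivAt.differentiableAt).continuousAt
  obtain ⟨φ, hφ, hφt⟩ := TopologicalSpace.FirstCountableTopology.tendsto_subseq hcl
  have hv2 : Tendsto (fun j => blockNormSq blk L (dL (y (φ j)))) atTop (nhds 0) :=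
    hv.comp hφ.tendsto_atTop
  -- Step A
  have stepA : ∀ (i : Fin N) (s : En n), (∀ j, blk j ≠ i → s j = 0) →
      h xbar ≤ ⟪g xbar, s⟫ + (3 / 2 * L i) * ‖s‖ ^ 2 + h (xbar + s) := by
    intro i s hs
    have hu : Tendsto (fun j => blockProj blk i (dL (y (φ j)))) atTop (nhds 0) := by
      rw [tendsto_zero_iff_norm_tendsto_zero]
      apply squeeze_zero (fun j => norm_nonneg _)
        (g := fun j => Real.sqrt (blockNormSq blk L (dL (y (φ j))) / L i))
      · intro j
        rw [← Real.sqrt_sq (norm_nonneg (blockProj blk i (dL (y (φ j)))))]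
        apply Real.sqrt_le_sqrt
        rw [le_div_iff₀ (hL i)]
        rw [mul_comm]
        exact bnsq_block_le blk L hL i _
      · have h0 : Tendsto (fun j => blockNormSq blk L (dL (y (φ j))) / L i) atTop
            (nhds 0) := by simpa using hv2.div_const (L i)
        have := (Real.continuous_sqrt.tendsto 0).comp h0
        simpa [Function.comp_def] using this
    have hle : ∀ j, f (y (φ j) + blockProj blk i (dL (y (φ j)))) - f (y (φ j)) + h (y (φ j) + blockProj blk i (dL (y (φ j))))
        ≤ f (y (φ j) + s) - f (y (φ j)) + L i * ‖s‖ ^ 2 + h (y (φ j) + s) := by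
      intro j
      have a1 := (abs_le.mp (descent_abs blk hg L hlip (y (φ j))
        (bp_supp blk i (dL (y (φ j)))))).2
      have a2 := block_swap blk L hL hsep hdL (y (φ j)) i hs
      have a3 := (abs_le.mp (descent_abs blk hg L hlip (y (φ j)) hs)).1
      linarith
    have hxj : Tendsto (fun j => y (φ j)) atTop (nhds xbar) := hφt
    have hxu : Tendsto (fun j => y (φ j) + blockProj blk i (dL (y (φ j)))) atTop (nhds xbar) := by
      have := hxj.add hu
      simpa using this
    have hxs : Tendsto (fun j => y (φ j) + s) atTop (nhds (xbar + s)) :=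
      hxj.add_const s
    have hLHS : Tendsto (fun j => f (y (φ j) + blockProj blk i (dL (y (φ j)))) - f (y (φ j)) + h (y (φ j) + blockProj blk i (dL (y (φ j)))))
        atTop (nhds (h xbar)) := by
      have l1 := (hfcont.tendsto xbar).comp hxu
      have l2 := (hfcont.tendsto xbar).comp hxj
      have l3 := (hcont.tendsto xbar).comp hxu
      have := (l1.sub l2).add l3
      simpa using this
    have hRHS : Tendsto (fun j => f (y (φ j) + s) - f (y (φ j)) + L i * ‖s‖ ^ 2
        + h (y (φ j) + s)) atTop
        (nhds (f (xbar + s) - f xbar + L i * ‖s‖ ^ 2 + h (xbar + s))) := by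
      have l1 := (hfcont.tendsto (xbar + s)).comp hxs
      have l2 := (hfcont.tendsto xbar).comp hxj
      have l3 := (hcont.tendsto (xbar + s)).comp hxs
      have := ((l1.sub l2).add_const (L i * ‖s‖ ^ 2)).add l3
      simpa using this
    have hlim := le_of_tendsto_of_tendsto' hLHS hRHS hle
    have a4 := (abs_le.mp (descent_abs blk hg L hlip xbar hs)).2
    linarith
  -- Step B
  have stepB : ∀ (i : Fin N) (s : En n), (∀ j, blk j ≠ i → s j = 0) →
      h xbar ≤ ⟪g xbar, s⟫ + h (xbar + s) := by
    intro i s hs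
    have step : ∀ t : ℝ, 0 < t → t < 1 →
        h xbar ≤ ⟪g xbar, s⟫ + 3 / 2 * L i * t * ‖s‖ ^ 2 + h (xbar + s) := by
      intro t ht ht1
      have hts : ∀ j, blk j ≠ i → (t • s) j = 0 := by
        intro j hj; show t • s j = 0; rw [hs j hj, smul_zero]
      have key := stepA i (t • s) hts
      rw [real_inner_smul_right, norm_smul, Real.norm_eq_abs, abs_of_nonneg ht.le] at key
      have e3 : h (xbar + t • s) ≤ (1 - t) * h xbar + t * h (xbar + s) := by
        have hxe : xbar + t • s = (1 - t) • xbar + t • (xbar + s) := by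
          rw [smul_add, sub_smul, one_smul]; abel
        rw [hxe]
        exact hconv.2 (Set.mem_univ _) (Set.mem_univ _) (by linarith) ht.le (by ring)
      have hmul : (t * ‖s‖) ^ 2 = t ^ 2 * ‖s‖ ^ 2 := by ring
      rw [hmul] at key
      nlinarith [key, e3, ht]
    have lim : Tendsto (fun m : ℕ =>
        ⟪g xbar, s⟫ + 3 / 2 * L i * (1 / ((m : ℝ) + 2)) * ‖s‖ ^ 2 + h (xbar + s)) atTop
        (nhds (⟪g xbar, s⟫ + 3 / 2 * L i * 0 * ‖s‖ ^ 2 + h (xbar + s))) := by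
      apply Tendsto.add_const
      apply Tendsto.const_add
      apply Tendsto.mul_const
      apply Tendsto.const_mul
      have h1 : Tendsto (fun m : ℕ => ((m : ℝ) + 2)) atTop atTop :=
        tendsto_atTop_add_const_right _ _ tendsto_natCast_atTop_atTop
      exact h1.inv_tendsto_atTop.congr (fun m => by simp [Pi.inv_apply, one_div])
    have hle := ge_of_tendsto' lim (fun m => by
      apply step
      · positivity
      · rw [div_lt_one (by positivity)]
        have : (0:ℝ) ≤ (m:ℝ) := Nat.cast_nonneg m
        linarith)
    simpa using hle
  -- Step C
  refine ⟨-(g xbar), ?_, add_neg_cancel _⟩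
  intro z
  set s := z - xbar with hsdef
  have per : ∀ i : Fin N,
      h xbar - h (xbar + blockProj blk i s) ≤ ⟪g xbar, blockProj blk i s⟫ := by
    intro i
    have := stepB i (blockProj blk i s) (bp_supp blk i s)
    linarith
  have hsum := Finset.sum_le_sum (fun i (_ : i ∈ Finset.univ) => per i)
  have e1 : ∑ i, ⟪g xbar, blockProj blk i s⟫ = ⟪g xbar, s⟫ := by
    rw [← inner_sum, sum_bp]
  have e2 : ∑ i, (h xbar - h (xbar + blockProj blk i s)) = h xbar - h (xbar + s) := by
    have := h_sum_blocks blk hsep xbar s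
    have e : ∑ i, (h xbar - h (xbar + blockProj blk i s))
        = -∑ i, (h (xbar + blockProj blk i s) - h xbar) := by
      rw [← Finset.sum_neg_distrib]
      apply Finset.sum_congr rfl; intro i _; ring
    rw [e, this]; ring
  rw [e1, e2] at hsum
  have e3 : xbar + s = z := by rw [hsdef]; abel
  rw [e3] at hsum
  have e4 : ⟪-(g xbar), z - xbar⟫ = -⟪g xbar, s⟫ := by
    rw [inner_neg_left, hsdef]
  rw [e4]
  linarith

lemma iter_snoc (d : En n → Fin N → En n) (x0 : En n) (k : ℕ)
    (a : Fin k → Fin N) (b : Fin N) :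
    iter d x0 (k+1) (Fin.snoc a b)
      = iter d x0 k a + d (iter d x0 k a) b := by
  have e : (fun j : Fin k => (Fin.snoc a b : Fin (k+1) → Fin N) j.castSucc) = a := by
    funext j; exact Fin.snoc_castSucc ..
  show iter d x0 (k+1) _ = _
  rw [iter, e, Fin.snoc_last]

lemma sum_split {M : Type*} [AddCommMonoid M] (k : ℕ)
    (v : (Fin (k+1) → Fin N) → M) :
    ∑ t, v t = ∑ a : Fin k → Fin N, ∑ b : Fin N, v (Fin.snoc a b) := by
  rw [← Equiv.sum_comp (Fin.snocEquiv (fun _ => Fin N)) v, Fintype.sum_prod_type]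
  rw [Finset.sum_comm]
  rfl

end aux

/-- **asymptotic convergence of 1-RCD.** Under the block Lipschitz and
convex-separable assumptions with uniform i.i.d. block selection `I k`, the 1-random
coordinate descent iterates `X (k+1) ω = X k ω + d (X k ω) (I k ω)` satisfy: the
optimality measures `M₁(x^k, L) = ‖D_L d_L(x^k)‖*_L = ‖d_L(x^k)‖_L` converge to `0`
almost surely, `F(x^k)` converges almost surely to a random variable `F̄`, and (almost
surely) every accumulation point of `(x^k)` is a stationary point of
`min_x f(x) + h(x)`, i.e. `0 ∈ ∇f(x̄) + ∂h(x̄)`. -/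
theorem stmt19 {n N : ℕ} (hN : 0 < N) (blk : Fin n → Fin N)
    (L : Fin N → ℝ) (hL : ∀ i, 0 < L i)
    (f h : En n → ℝ) (g : En n → En n) (hg : ∀ x, HasGradientAt f (g x) x)
    (hlip : ∀ (i : Fin N) (x s : En n), (∀ j, blk j ≠ i → s j = 0) →
      ‖blockProj blk i (g (x + s)) - blockProj blk i (g x)‖ ≤ L i * ‖s‖)
    (H : Fin N → En n → ℝ) (hHconv : ∀ k, ConvexOn ℝ Set.univ (H k))
    (hsep : ∀ x, h x = ∑ k, H k (blockProj blk k x)) (hcont : Continuous h)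
    (F : En n → ℝ) (hF : ∀ x, F x = f x + h x) (hFbd : BddBelow (Set.range F))
    -- the block coordinate descent directions
    (d : En n → Fin N → En n)
    (hdsupp : ∀ x i j, blk j ≠ i → d x i j = 0)
    (hdmin : ∀ (x : En n) (i : Fin N) (s : En n), (∀ j, blk j ≠ i → s j = 0) →
      f x + ⟪g x, d x i⟫ + L i / 2 * ‖d x i‖ ^ 2 + h (x + d x i) ≤
      f x + ⟪g x, s⟫ + L i / 2 * ‖s‖ ^ 2 + h (x + s))
    -- the full proximal-gradient map `d_L`
    (dL : En n → En n)
    (hdL : ∀ x s : En n,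
      f x + ⟪g x, dL x⟫ + (1 / 2) * blockNormSq blk L (dL x) + h (x + dL x) ≤
      f x + ⟪g x, s⟫ + (1 / 2) * blockNormSq blk L s + h (x + s))
    -- the i.i.d. uniformly distributed random block indices on a probability space
    {Ω : Type*} [MeasurableSpace Ω] (μ : MeasureTheory.Measure Ω)
    [MeasureTheory.IsProbabilityMeasure μ]
    (I : ℕ → Ω → Fin N) (hImeas : ∀ k, Measurable (I k))
    (hIindep : ProbabilityTheory.iIndepFun I μ)
    (hIunif : ∀ k i, μ (I k ⁻¹' {i}) = (N : ENNReal)⁻¹)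
    -- the random iterates
    (x0 : En n) (X : ℕ → Ω → En n) (hX0 : ∀ ω, X 0 ω = x0)
    (hXs : ∀ k ω, X (k + 1) ω = X k ω + d (X k ω) (I k ω)) :
    (∀ᵐ ω ∂μ, Tendsto (fun k => Real.sqrt (blockNormSq blk L (dL (X k ω)))) atTop
      (nhds 0)) ∧
    (∃ Fbar : Ω → ℝ,
      ∀ᵐ ω ∂μ, Tendsto (fun k => F (X k ω)) atTop (nhds (Fbar ω))) ∧
    (∀ᵐ ω ∂μ, ∀ xbar : En n, MapClusterPt xbar atTop (fun k => X k ω) →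
      ∃ gh : En n, IsSubgradientAt h gh xbar ∧ g xbar + gh = 0) := by
  classical
  obtain ⟨c, hc⟩ := hFbd
  have hcF : ∀ z, c ≤ F z := fun z => hc (Set.mem_range_self z)
  have hN' : (0:ℝ) < N := by exact_mod_cast hN
  set rA : ℕ → ℝ := fun k => (N:ℝ)⁻¹^k * ∑ t : Fin k → Fin N, F (iter d x0 k t) with hrA
  set rB : ℕ → ℝ := fun k => (N:ℝ)⁻¹^k
    * ∑ t : Fin k → Fin N, blockNormSq blk L (dL (iter d x0 k t)) with hrBdef
  have hBnn : ∀ k, 0 ≤ rB k := by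
    intro k
    apply mul_nonneg (by positivity)
    exact Finset.sum_nonneg fun t _ => bnsq_nonneg blk L hL _
  have hrec : ∀ k, rA (k+1) ≤ rA k - (1/(2*(N:ℝ))) * rB k := by
    intro k
    have hsplit : ∑ t : Fin (k+1) → Fin N, F (iter d x0 (k+1) t)
        = ∑ a : Fin k → Fin N, ∑ b : Fin N, F (iter d x0 k a + d (iter d x0 k a) b) := by
      rw [sum_split]
      apply Finset.sum_congr rfl; intro a _
      apply Finset.sum_congr rfl; intro b _
      rw [iter_snoc]
    have hkey : ∑ a : Fin k → Fin N, ∑ b : Fin N, F (iter d x0 k a + d (iter d x0 k a) b)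
        ≤ ∑ a : Fin k → Fin N, ((N:ℝ) * F (iter d x0 k a)
            - (1/2) * blockNormSq blk L (dL (iter d x0 k a))) := by
      apply Finset.sum_le_sum
      intro a _
      exact key_sum blk L hL hg hlip hHconv hsep hF hdsupp hdmin hdL (iter d x0 k a)
    rw [hrA, hrBdef]
    simp only []
    rw [hsplit]
    rw [Finset.sum_sub_distrib] at hkey
    rw [← Finset.mul_sum, ← Finset.mul_sum] at hkey
    have hq : (0:ℝ) ≤ (N:ℝ)⁻¹^(k+1) := by positivity
    have := mul_le_mul_of_nonneg_left hkey hq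
    calc (N:ℝ)⁻¹^(k+1) * ∑ a : Fin k → Fin N, ∑ b : Fin N,
          F (iter d x0 k a + d (iter d x0 k a) b)
        ≤ (N:ℝ)⁻¹^(k+1) * ((N:ℝ) * ∑ a : Fin k → Fin N, F (iter d x0 k a)
            - (1/2) * ∑ a : Fin k → Fin N, blockNormSq blk L (dL (iter d x0 k a))) := this
      _ = (N:ℝ)⁻¹^k * ∑ a : Fin k → Fin N, F (iter d x0 k a)
          - (1/(2*(N:ℝ))) * ((N:ℝ)⁻¹^k
              * ∑ a : Fin k → Fin N, blockNormSq blk L (dL (iter d x0 k a))) := by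
          rw [pow_succ]
          field_simp
  have hA_lb : ∀ k, c ≤ rA k := by
    intro k
    rw [hrA]
    simp only []
    have h1 : (Fintype.card (Fin k → Fin N) : ℝ) * c ≤ ∑ t : Fin k → Fin N, F (iter d x0 k t) := by
      have := Finset.card_nsmul_le_sum (Finset.univ : Finset (Fin k → Fin N))
        (fun t => F (iter d x0 k t)) c (fun t _ => hcF _)
      rw [Finset.card_univ, nsmul_eq_mul] at this
      exact_mod_cast this
    have hcard : (Fintype.card (Fin k → Fin N) : ℝ) = (N:ℝ)^k := by
      rw [Fintype.card_fun]
      simp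
    rw [hcard] at h1
    have := mul_le_mul_of_nonneg_left h1 (by positivity : (0:ℝ) ≤ (N:ℝ)⁻¹^k)
    calc c = (N:ℝ)⁻¹^k * ((N:ℝ)^k * c) := by
            rw [← mul_assoc, ← mul_pow, inv_mul_cancel₀ hN'.ne', one_pow, one_mul]
      _ ≤ _ := this
  have hpartial : ∀ K, ∑ k ∈ Finset.range K, rB k ≤ 2*(N:ℝ)*(rA 0 - rA K) := by
    intro K
    induction K with
    | zero => simp
    | succ K ih =>
        rw [Finset.sum_range_succ]
        have h2 := hrec K
        have h3 : rB K ≤ 2*(N:ℝ)*(rA K - rA (K+1)) := by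
          have h2' := mul_le_mul_of_nonneg_left h2 (by positivity : (0:ℝ) ≤ 2*(N:ℝ))
          have e2 : 2*(N:ℝ) * (rA K - 1/(2*(N:ℝ)) * rB K) = 2*(N:ℝ)*rA K - rB K := by
            field_simp
          rw [e2] at h2'
          linarith
        linarith
  have hpartial2 : ∀ K, ∑ k ∈ Finset.range K, rB k ≤ 2*(N:ℝ)*(rA 0 - c) := by
    intro K
    have := hA_lb K
    have h4 := hpartial K
    nlinarith [h4, this, hN']
  -- ENNReal side
  have hXiter : ∀ k ω, X k ω = iter d x0 k (fun j : Fin k => I (j:ℕ) ω) :=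
    fun k ω => X_eq_iter hX0 hXs k ω
  set gk : ℕ → Ω → ENNReal :=
    fun k ω => ENNReal.ofReal (blockNormSq blk L (dL (X k ω))) with hgk
  have hmeas : ∀ k, Measurable (gk k) := by
    intro k
    have : gk k = (fun t : Fin k → Fin N => ENNReal.ofReal
        (blockNormSq blk L (dL (iter d x0 k t)))) ∘ (fun ω => fun j : Fin k => I (j:ℕ) ω) := by
      funext ω
      simp only [hgk, Function.comp_apply, hXiter k ω]
    rw [this]
    exact (measurable_of_countable _).comp (measurable_pi_lambda _ fun j => hImeas (j:ℕ))
  have hlint : ∀ k, ∫⁻ ω, gk k ω ∂μ = ENNReal.ofReal (rB k) := by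
    intro k
    have e0 : ∀ ω, gk k ω = ENNReal.ofReal
        (blockNormSq blk L (dL (iter d x0 k (fun j : Fin k => I (j:ℕ) ω)))) := by
      intro ω; rw [hgk]; simp only [hXiter k ω]
    rw [lintegral_congr e0]
    rw [tuple_lintegral μ hImeas hIindep hIunif k
      (fun t => ENNReal.ofReal (blockNormSq blk L (dL (iter d x0 k t))))]
    rw [hrBdef]
    simp only []
    rw [ENNReal.ofReal_mul (by positivity)]
    rw [ENNReal.ofReal_sum_of_nonneg (fun t _ => bnsq_nonneg blk L hL _)]
    rw [← Finset.sum_mul, mul_comm]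
    congr 1
    rw [ENNReal.ofReal_pow (by positivity)]
    congr 1
    rw [ENNReal.ofReal_inv_of_pos hN']
    congr 1
    exact (ENNReal.ofReal_natCast N).symm
  have htsumB : ∑' k, ENNReal.ofReal (rB k) ≤ ENNReal.ofReal (2*(N:ℝ)*(rA 0 - c)) := by
    rw [ENNReal.tsum_eq_iSup_nat]
    apply iSup_le
    intro K
    rw [← ENNReal.ofReal_sum_of_nonneg (fun k _ => hBnn k)]
    exact ENNReal.ofReal_le_ofReal (hpartial2 K)
  have hlintsum : ∫⁻ ω, ∑' k, gk k ω ∂μ = ∑' k, ENNReal.ofReal (rB k) := by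
    rw [lintegral_tsum (fun k => (hmeas k).aemeasurable)]
    exact tsum_congr hlint
  have hfin : ∫⁻ ω, ∑' k, gk k ω ∂μ ≠ ⊤ := by
    rw [hlintsum]
    exact (lt_of_le_of_lt htsumB ENNReal.ofReal_lt_top).ne
  have haelt : ∀ᵐ ω ∂μ, ∑' k, gk k ω < ⊤ :=
    ae_lt_top (Measurable.ennreal_tsum hmeas) hfin
  have haetend : ∀ᵐ ω ∂μ,
      Tendsto (fun k => blockNormSq blk L (dL (X k ω))) atTop (nhds 0) := by
    filter_upwards [haelt] with ω hω
    have h1 : Tendsto (fun k => gk k ω) atTop (nhds 0) :=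
      ENNReal.tendsto_atTop_zero_of_tsum_ne_top hω.ne
    have h2 := (ENNReal.tendsto_toReal (by simp : (0:ENNReal) ≠ ⊤)).comp h1
    simp only [Function.comp_def, ENNReal.toReal_zero] at h2
    apply h2.congr
    intro k
    simp only [hgk]
    exact ENNReal.toReal_ofReal (bnsq_nonneg blk L hL _)
  refine ⟨?_, ⟨fun ω => ⨅ k, F (X k ω), ?_⟩, ?_⟩
  · filter_upwards [haetend] with ω hω
    have := (Real.continuous_sqrt.tendsto 0).comp hω
    simpa [Real.sqrt_zero, Function.comp_def] using this
  · apply Filter.Eventually.of_forall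
    intro ω
    apply tendsto_atTop_ciInf
    · apply antitone_nat_of_succ_le
      intro k
      rw [hXs k ω]
      exact F_decrease blk L hg hlip hF hdsupp hdmin (X k ω) (I k ω)
    · refine ⟨c, ?_⟩
      rintro z ⟨k, rfl⟩
      exact hcF _
  · filter_upwards [haetend] with ω hω xbar hcl
    exact cluster_stationary blk L hL hg hlip hHconv hsep hcont hdL (fun k => X k ω)
      hω xbar hcl
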